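/- arXiv:1905.09656 — 8 statements merged into one kernel-verified Lean document; each statement's English description precedes it below -/
import Mathlib

section
/- For integers t ≥ 1, i ≥ 1, and j with 2t < j < 2t + i, the following product identity holds: (∏_{l=j-2t+1}^{i-1} (2t + 2l)) / (∏_{l=j-2t+1}^{i} (2t + 2l - 1)) = 2^(4t - 2j + 2i - 2) · ((t+i-1)!/(j-t)!)^2 · (2j-2t)!/(2t+2i-1)!. -/
open Finset Nat

private lemma evens_prod (t a : ℕ) : ∀ b, a ≤ b →
    (∏ l ∈ Finset.Icc (a + 1) b, ((2 * t + 2 * l : ℕ) : ℚ)) =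
      2 ^ (b - a) * ((t + b)! : ℚ) / ((t + a)! : ℚ) := by
  intro b
  induction b with
  | zero =>
    intro h; interval_cases a
    simp only [Finset.Icc_self, Nat.sub_self, pow_zero, one_mul]
    rw [show Finset.Icc 1 0 = ∅ from rfl, Finset.prod_empty,
      div_self (Nat.cast_ne_zero.mpr (Nat.factorial_ne_zero _))]
  | succ b ih =>
    intro h
    rcases Nat.eq_or_lt_of_le h with h' | h'
    · subst h'
      simp only [Nat.sub_self, pow_zero, one_mul]
      rw [show Finset.Icc (b + 1 + 1) (b + 1) = ∅ from Finset.Icc_eq_empty (by omega),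
        Finset.prod_empty, div_self (Nat.cast_ne_zero.mpr (Nat.factorial_ne_zero _))]
    · have hab : a ≤ b := by omega
      rw [Finset.prod_Icc_succ_top (by omega), ih hab]
      have h1 : (t + (b + 1))! = (t + b + 1) * (t + b)! := by
        rw [show t + (b + 1) = (t + b) + 1 from by ring, Nat.factorial_succ]
      have h2 : b + 1 - a = (b - a) + 1 := by omega
      rw [h1, h2]
      have hne : ((t + a)! : ℚ) ≠ 0 := Nat.cast_ne_zero.mpr (Nat.factorial_ne_zero _)
      field_simp

      push_cast
      ring

private lemma odds_prod (t a : ℕ) : ∀ b, a ≤ b →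
    (∏ l ∈ Finset.Icc (a + 1) b, ((2 * t + 2 * l - 1 : ℕ) : ℚ)) =
      ((2 * (t + b))! : ℚ) * ((t + a)! : ℚ) /
        (((2 * (t + a))! : ℚ) * ((t + b)! : ℚ) * 2 ^ (b - a)) := by
  intro b
  induction b with
  | zero =>
    intro h; interval_cases a
    simp only [Nat.sub_self, pow_zero, mul_one]
    rw [show Finset.Icc 1 0 = ∅ from rfl, Finset.prod_empty, div_self]
    exact mul_ne_zero (Nat.cast_ne_zero.mpr (Nat.factorial_ne_zero _))
      (Nat.cast_ne_zero.mpr (Nat.factorial_ne_zero _))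
  | succ b ih =>
    intro h
    rcases Nat.eq_or_lt_of_le h with h' | h'
    · subst h'
      simp only [Nat.sub_self, pow_zero, mul_one]
      rw [show Finset.Icc (b + 1 + 1) (b + 1) = ∅ from Finset.Icc_eq_empty (by omega),
        Finset.prod_empty, div_self]
      exact mul_ne_zero (Nat.cast_ne_zero.mpr (Nat.factorial_ne_zero _))
        (Nat.cast_ne_zero.mpr (Nat.factorial_ne_zero _))
    · have hab : a ≤ b := by omega
      rw [Finset.prod_Icc_succ_top (by omega), ih hab]
      have e1 : (2 * t + 2 * (b + 1) - 1 : ℕ) = 2 * t + 2 * b + 1 := by omega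
      have e2 : (2 * (t + (b + 1)))! = (2 * t + 2 * b + 2) * ((2 * t + 2 * b + 1) * (2 * (t + b))!) := by
        rw [show 2 * (t + (b + 1)) = (2 * t + 2 * b + 1) + 1 from by ring, Nat.factorial_succ,
          show 2 * t + 2 * b + 1 = (2 * (t + b)) + 1 from by ring, Nat.factorial_succ]
        ring_nf
      have e3 : (t + (b + 1))! = (t + b + 1) * (t + b)! := by
        rw [show t + (b + 1) = (t + b) + 1 from by ring, Nat.factorial_succ]
      have e4 : b + 1 - a = (b - a) + 1 := by omega
      rw [e1, e2, e3, e4]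
      have hne1 : ((2 * (t + a))! : ℚ) ≠ 0 := Nat.cast_ne_zero.mpr (Nat.factorial_ne_zero _)
      have hne2 : ((t + b)! : ℚ) ≠ 0 := Nat.cast_ne_zero.mpr (Nat.factorial_ne_zero _)
      field_simp

      push_cast
      ring

/-- Product identity used to simplify `P(X_i = j)` for `2t < j < 2t + i` in the
MergeInsertion insertion step:
`(∏_{l=j-2t+1}^{i-1} (2t+2l)) / (∏_{l=j-2t+1}^{i} (2t+2l-1))
  = 2^(4t-2j+2i-2) · ((t+i-1)!/(j-t)!)² · (2j-2t)!/(2t+2i-1)!`. -/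
theorem mergeInsertion_prod_identity_second (t i j : ℕ) (ht : 1 ≤ t) (hi : 1 ≤ i)
    (hj₁ : 2 * t < j) (hj₂ : j < 2 * t + i) :
    (∏ l ∈ Finset.Icc (j - 2 * t + 1) (i - 1), ((2 * t + 2 * l : ℕ) : ℚ)) /
        (∏ l ∈ Finset.Icc (j - 2 * t + 1) i, ((2 * t + 2 * l - 1 : ℕ) : ℚ)) =
      2 ^ (4 * t + 2 * i - 2 * j - 2) * (((t + i - 1)! : ℚ) / ((j - t)! : ℚ)) ^ 2 *
        ((2 * j - 2 * t)! : ℚ) / (((2 * t + 2 * i - 1)!) : ℚ) := by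
  obtain ⟨a, rfl⟩ : ∃ a, j = 2 * t + a := ⟨j - 2 * t, by omega⟩
  have ha : 1 ≤ a := by omega
  obtain ⟨k, rfl⟩ : ∃ k, i = a + k + 1 := ⟨i - a - 1, by omega⟩
  rw [show 2 * t + a - 2 * t = a from by omega]
  rw [evens_prod t a (a + k + 1 - 1) (by omega), odds_prod t a (a + k + 1) (by omega)]
  rw [show a + k + 1 - 1 = a + k from by omega,
    show t + (a + k) = t + a + k from by ring,
    show a + k - a = k from by omega,
    show 4 * t + 2 * (a + k + 1) - 2 * (2 * t + a) - 2 = 2 * k from by omega,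
    show t + (a + k + 1) - 1 = t + a + k from by omega,
    show 2 * t + a - t = t + a from by omega,
    show 2 * (2 * t + a) - 2 * t = 2 * (t + a) from by omega,
    show 2 * t + 2 * (a + k + 1) - 1 = 2 * (t + a + k) + 1 from by omega,
    show a + k + 1 - a = k + 1 from by omega]
  have e1 : ((t + (a + k + 1))! : ℚ) = (t + a + k + 1) * ((t + a + k)! : ℚ) := by
    rw [show t + (a + k + 1) = (t + a + k) + 1 from by ring, Nat.factorial_succ]; push_cast; ring
  have e2 : ((2 * (t + (a + k + 1)))! : ℚ) =
      (2 * (t + a + k) + 2) * (((2 * (t + a + k) + 1)! : ℚ)) := by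
    rw [show 2 * (t + (a + k + 1)) = (2 * (t + a + k) + 1) + 1 from by ring, Nat.factorial_succ]
    push_cast; ring
  rw [e1, e2]
  have hne1 : ((t + a)! : ℚ) ≠ 0 := Nat.cast_ne_zero.mpr (Nat.factorial_ne_zero _)
  have hne2 : ((t + a + k)! : ℚ) ≠ 0 := Nat.cast_ne_zero.mpr (Nat.factorial_ne_zero _)
  have hne3 : ((2 * (t + a))! : ℚ) ≠ 0 := Nat.cast_ne_zero.mpr (Nat.factorial_ne_zero _)
  have hne4 : ((2 * (t + a + k) + 1)! : ℚ) ≠ 0 := Nat.cast_ne_zero.mpr (Nat.factorial_ne_zero _)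
  have hne5 : ((2 : ℚ) * (t + a + k) + 2) ≠ 0 := by positivity
  field_simp

  ring
end

section
/- Fix integers t ≥ 1 and i ≥ 1. Define P(i, j) by P(i, j) = 2^(2i-2)·((t+i-1)!/t!)^2·(2t)!/(2t+2i-1)! for 0 ≤ j ≤ 2t, P(i, j) = 2^(4t-2j+2i-2)·((t+i-1)!/(j-t)!)^2·(2j-2t)!/(2t+2i-1)! for 2t < j < 2t+i, and P(i, j) = 0 otherwise. Then for each i ≥ 1, the values P(i, j) sum over all j ≥ 0 to 1. -/
open Nat

/-- Central binomial-type quantity `(2m)! / (4^m (m!)^2)`. -/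
noncomputable def ccAux (m : ℕ) : ℝ := ((2 * m)! : ℝ) / (4 ^ m * ((m)! : ℝ) ^ 2)

lemma factorial_cast_ne_zero (n : ℕ) : ((n)! : ℝ) ≠ 0 := by
  exact_mod_cast (Nat.factorial_pos n).ne'

lemma ccAux_rec (n : ℕ) : (2 * (n : ℝ) + 1) * ccAux n = (2 * (n : ℝ) + 2) * ccAux (n + 1) := by
  unfold ccAux
  have h1 : 2 * (n + 1) = (2 * n + 1) + 1 := by ring
  rw [h1, Nat.factorial_succ, Nat.factorial_succ, Nat.factorial_succ]
  have hf := factorial_cast_ne_zero n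
  have h2 : (4 : ℝ) ^ (n + 1) = 4 ^ n * 4 := by ring
  rw [h2]
  push_cast
  have h4 : (4 : ℝ) ^ n ≠ 0 := by positivity
  field_simp
  ring

lemma ccAux_key (t : ℕ) : ∀ k : ℕ,
    (2 * (t : ℝ) + 1) * ccAux t + ∑ m ∈ Finset.range k, ccAux (t + 1 + m)
      = (2 * ((t : ℝ) + k) + 1) * ccAux (t + k) := by
  intro k
  induction k with
  | zero => simp
  | succ k ih =>
      rw [Finset.sum_range_succ, ← add_assoc, ih]
      have h := ccAux_rec (t + k)
      push_cast at h ⊢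
      have e : t + 1 + k = t + k + 1 := by ring
      have e2 : t + (k + 1) = t + k + 1 := by ring
      rw [e, e2]
      linarith [h]

/-- The probabilities `P(X_i = j)` from Theorem 1 of the paper (position
distribution when inserting `b_{t+i}` during one batch of MergeInsertion,
`t = t_{k-1}`) sum to `1` over all `j ≥ 0`. -/
theorem mergeInsertion_Xi_dist_sums_to_one (t i : ℕ) (ht : 1 ≤ t) (hi : 1 ≤ i)
    (P : ℕ → ℝ)
    (hP : ∀ j : ℕ, P j =
      if j ≤ 2 * t then
        2 ^ (2 * i - 2) * (((t + i - 1)! : ℝ) / (t ! : ℝ)) ^ 2 *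
          ((2 * t)! : ℝ) / ((2 * t + 2 * i - 1)! : ℝ)
      else if j < 2 * t + i then
        2 ^ (4 * t + 2 * i - 2 * j - 2) * (((t + i - 1)! : ℝ) / ((j - t)! : ℝ)) ^ 2 *
          ((2 * j - 2 * t)! : ℝ) / ((2 * t + 2 * i - 1)! : ℝ)
      else 0) :
    ∑' j : ℕ, P j = 1 := by
  obtain ⟨I, rfl⟩ : ∃ I, i = I + 1 := ⟨i - 1, by omega⟩
  set C : ℝ := ((t + I)! : ℝ) ^ 2 * 4 ^ (t + I) / ((2 * t + 2 * I + 1)! : ℝ) with hC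
  -- values of P on the two branches
  have hlow : ∀ j : ℕ, j ≤ 2 * t → P j = C * ccAux t := by
    intro j hj
    rw [hP j, if_pos hj]
    have e1 : 2 * (I + 1) - 2 = 2 * I := by omega
    have e2 : t + (I + 1) - 1 = t + I := by omega
    have e3 : 2 * t + 2 * (I + 1) - 1 = 2 * t + 2 * I + 1 := by omega
    rw [e1, e2, e3, hC]
    unfold ccAux
    have h2 : (2 : ℝ) ^ (2 * I) = 4 ^ I := by
      rw [pow_mul]; norm_num
    have h3 : (4 : ℝ) ^ (t + I) = 4 ^ t * 4 ^ I := pow_add 4 t I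
    rw [h2, h3]
    have hf1 := factorial_cast_ne_zero t
    have hf2 := factorial_cast_ne_zero (2 * t + 2 * I + 1)
    have h4 : (4 : ℝ) ^ t ≠ 0 := by positivity
    field_simp
  have hmid : ∀ k : ℕ, k < I → P (2 * t + 1 + k) = C * ccAux (t + 1 + k) := by
    intro k hk
    obtain ⟨d, rfl⟩ : ∃ d, I = k + 1 + d := ⟨I - (k + 1), by omega⟩
    rw [hP, if_neg (by omega), if_pos (by omega)]
    have e1 : 4 * t + 2 * ((k + 1 + d) + 1) - 2 * (2 * t + 1 + k) - 2 = 2 * d := by omega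
    have e2 : t + ((k + 1 + d) + 1) - 1 = t + k + 1 + d := by omega
    have e3 : 2 * t + 1 + k - t = t + 1 + k := by omega
    have e4 : 2 * (2 * t + 1 + k) - 2 * t = 2 * (t + 1 + k) := by omega
    have e5 : 2 * t + 2 * ((k + 1 + d) + 1) - 1 = 2 * t + 2 * (k + 1 + d) + 1 := by omega
    rw [e1, e2, e3, e4, e5, hC]
    unfold ccAux
    have h2 : (2 : ℝ) ^ (2 * d) = 4 ^ d := by rw [pow_mul]; norm_num
    have h3 : (4 : ℝ) ^ (t + (k + 1 + d)) = 4 ^ (t + 1 + k) * 4 ^ d := by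
      rw [← pow_add]; ring_nf
    have e6 : t + (k + 1 + d) = t + k + 1 + d := by ring
    rw [h2, e6] at *
    have h3' : (4 : ℝ) ^ (t + k + 1 + d) = 4 ^ (t + 1 + k) * 4 ^ d := by
      rw [← pow_add]; congr 1; ring
    rw [h3']
    have hf1 := factorial_cast_ne_zero (t + 1 + k)
    have hf2 := factorial_cast_ne_zero (2 * t + 2 * (k + 1 + d) + 1)
    have h4 : (4 : ℝ) ^ (t + 1 + k) ≠ 0 := by positivity
    field_simp
  have hzero : ∀ j ∉ Finset.range (2 * t + I + 1), P j = 0 := by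
    intro j hj
    rw [Finset.mem_range, not_lt] at hj
    rw [hP j, if_neg (by omega), if_neg (by omega)]
  rw [tsum_eq_sum hzero]
  have hsplit : Finset.range (2 * t + I + 1)
      = Finset.Ico 0 (2 * t + 1) ∪ Finset.Ico (2 * t + 1) (2 * t + I + 1) := by
    rw [Finset.range_eq_Ico, Finset.Ico_union_Ico_eq_Ico (by omega) (by omega)]
  rw [hsplit, Finset.sum_union (by
    apply Finset.Ico_disjoint_Ico_consecutive)]
  have hsum1 : ∑ j ∈ Finset.Ico 0 (2 * t + 1), P j = (2 * (t : ℝ) + 1) * (C * ccAux t) := by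
    rw [← Finset.range_eq_Ico]
    rw [Finset.sum_congr rfl (fun j hj => hlow j (by
      rw [Finset.mem_range] at hj; omega))]
    rw [Finset.sum_const, Finset.card_range, nsmul_eq_mul]
    push_cast
    ring
  have hsum2 : ∑ j ∈ Finset.Ico (2 * t + 1) (2 * t + I + 1), P j
      = ∑ k ∈ Finset.range I, C * ccAux (t + 1 + k) := by
    rw [Finset.sum_Ico_eq_sum_range]
    have e : 2 * t + I + 1 - (2 * t + 1) = I := by omega
    rw [e]
    exact Finset.sum_congr rfl fun k hk => hmid k (Finset.mem_range.mp hk)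
  rw [hsum1, hsum2, ← Finset.mul_sum]
  have := ccAux_key t I
  have hgoal : (2 * (t : ℝ) + 1) * (C * ccAux t) + C * ∑ m ∈ Finset.range I, ccAux (t + 1 + m)
      = C * ((2 * ((t : ℝ) + I) + 1) * ccAux (t + I)) := by
    rw [← this]; ring
  rw [hgoal, hC]
  unfold ccAux
  have e7 : 2 * (t + I) = 2 * t + 2 * I := by ring
  have e8 : (2 * t + 2 * I + 1)! = (2 * t + 2 * I + 1) * (2 * t + 2 * I)! :=
    Nat.factorial_succ _
  rw [e7, e8]
  have hf1 := factorial_cast_ne_zero (t + I)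
  have hf2 := factorial_cast_ne_zero (2 * t + 2 * I)
  have h4 : (4 : ℝ) ^ (t + I) ≠ 0 := by positivity
  push_cast
  field_simp
end

section
/- Fix integers t ≥ 1 and i ≥ 1. Define Q(q, j) = ((2q-j)! / (2^(q-j) · j! · (q-j)!)) · 2^q · (2t+2i+j-1)!/(2t+2i+2q-1)! · (t+i+q-1)!/(t+i-1)! for 0 ≤ j ≤ q, and Q(q, j) = 0 otherwise. Then Q(0, 0) = 1 and for all q ≥ 1 and 0 ≤ j ≤ q, Q(q, j) = ((2t+2i+j-1)/(2t+2i+2q-1)) · Q(q-1, j-1) + ((2q-j-1)/(2t+2i+2q-1)) · Q(q-1, j). -/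
open Nat

private lemma fac_peel (n : ℕ) : ((n + 1)! : ℝ) = ((n : ℝ) + 1) * (n ! : ℝ) := by
  rw [Nat.factorial_succ]; push_cast; ring

private lemma clear_den {L X Y c1 c2 D : ℝ} (h : D ≠ 0)
    (hmul : L * D = c1 * X + c2 * Y) : L = c1 / D * X + c2 / D * Y := by
  rw [div_mul_eq_mul_div, div_mul_eq_mul_div, ← add_div, eq_div_iff h]
  exact hmul

private lemma fac_ne (n : ℕ) : ((n ! : ℕ) : ℝ) ≠ 0 :=
  Nat.cast_ne_zero.mpr n.factorial_ne_zero

set_option maxHeartbeats 2000000 in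
/-- The closed form `Q q j` for `P(Ỹ_{i,q} = j)` in the MergeInsertion analysis
satisfies `Q 0 0 = 1` and the recurrence
`Q q j = ((2t+2i+j-1)/(2t+2i+2q-1))·Q (q-1) (j-1) + ((2q-j-1)/(2t+2i+2q-1))·Q (q-1) j`
for `q ≥ 1` and `0 ≤ j ≤ q` (with the convention that `Q` vanishes outside
`0 ≤ j ≤ q`). Here `t = t_{k-1}`. -/
theorem mergeInsertion_Ytilde_closed_form (t i : ℕ) (ht : 1 ≤ t) (hi : 1 ≤ i)
    (Q : ℕ → ℤ → ℝ)
    (hQ : ∀ (q : ℕ) (j : ℤ), Q q j =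
      if 0 ≤ j ∧ j ≤ (q : ℤ) then
        ((2 * q - j.toNat)! : ℝ) /
            (2 ^ (q - j.toNat) * (j.toNat ! : ℝ) * ((q - j.toNat)! : ℝ)) *
          2 ^ q * ((2 * t + 2 * i + j.toNat - 1)! : ℝ) / ((2 * t + 2 * i + 2 * q - 1)! : ℝ) *
          ((t + i + q - 1)! : ℝ) / ((t + i - 1)! : ℝ)
      else 0) :
    Q 0 0 = 1 ∧
      ∀ (q : ℕ), 1 ≤ q → ∀ j : ℤ, 0 ≤ j → j ≤ (q : ℤ) →
        Q q j =
          (((2 * t + 2 * i : ℕ) : ℝ) + (j : ℝ) - 1) / ((2 * t + 2 * i + 2 * q : ℕ) - 1) *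
              Q (q - 1) (j - 1) +
            (2 * (q : ℝ) - (j : ℝ) - 1) / ((2 * t + 2 * i + 2 * q : ℕ) - 1) * Q (q - 1) j := by
  obtain ⟨t', rfl⟩ : ∃ t', t = t' + 1 := ⟨t - 1, by omega⟩
  obtain ⟨i', rfl⟩ : ∃ i', i = i' + 1 := ⟨i - 1, by omega⟩
  constructor
  · rw [hQ]
    rw [if_pos (by constructor <;> simp)]
    have e1 : 2 * (t' + 1) + 2 * (i' + 1) + (0 : ℤ).toNat - 1 = 2 * t' + 2 * i' + 3 := by
      simp; omega
    have e2 : 2 * (t' + 1) + 2 * (i' + 1) + 2 * 0 - 1 = 2 * t' + 2 * i' + 3 := by omega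
    have e3 : (t' + 1) + (i' + 1) + 0 - 1 = t' + i' + 1 := by omega
    have e4 : (t' + 1) + (i' + 1) - 1 = t' + i' + 1 := by omega
    rw [e1, e2, e3, e4]
    have n0 := fac_ne (2 * t' + 2 * i' + 3)
    have n1 := fac_ne (t' + i' + 1)
    simp only [Nat.factorial_zero, Nat.cast_one, pow_zero, Nat.sub_zero]
    norm_num
    field_simp
  · intro q hq j hj0 hjq
    obtain ⟨m, rfl⟩ := Int.eq_ofNat_of_zero_le hj0
    obtain ⟨q', rfl⟩ : ∃ q', q = q' + 1 := ⟨q - 1, by omega⟩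
    have hmq : m ≤ q' + 1 := by exact_mod_cast hjq
    have hsub : q' + 1 - 1 = q' := rfl
    rcases Nat.eq_zero_or_pos m with rfl | hm
    · -- j = 0 case
      simp only [Nat.cast_zero, Int.cast_zero, hsub, zero_sub]
      rw [hQ (q' + 1) 0, hQ q' (-1), hQ q' 0,
        if_pos ⟨le_refl 0, Int.natCast_nonneg (q' + 1)⟩,
        if_neg (by norm_num),
        if_pos ⟨le_refl 0, Int.natCast_nonneg q'⟩]
      simp only [Int.toNat_zero]
      have e1 : 2 * (q' + 1) - 0 = 2 * q' + 1 + 1 := by omega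
      have e2 : q' + 1 - 0 = q' + 1 := by omega
      have e3 : 2 * (t' + 1) + 2 * (i' + 1) + 0 - 1 = 2 * t' + 2 * i' + 3 := by omega
      have e4 : 2 * (t' + 1) + 2 * (i' + 1) + 2 * (q' + 1) - 1 =
          2 * t' + 2 * i' + 2 * q' + 3 + 1 + 1 := by omega
      have e5 : t' + 1 + (i' + 1) + (q' + 1) - 1 = t' + i' + q' + 1 + 1 := by omega
      have e6 : t' + 1 + (i' + 1) - 1 = t' + i' + 1 := by omega
      have e7 : 2 * q' - 0 = 2 * q' := by omega
      have e8 : q' - 0 = q' := by omega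
      have e9 : 2 * (t' + 1) + 2 * (i' + 1) + 2 * q' - 1 = 2 * t' + 2 * i' + 2 * q' + 3 := by omega
      have e10 : t' + 1 + (i' + 1) + q' - 1 = t' + i' + q' + 1 := by omega
      rw [e1, e2, e3, e4, e5, e6, e7, e8, e9, e10]
      rw [fac_peel (2 * q' + 1), fac_peel (2 * q'), fac_peel q',
        fac_peel (2 * t' + 2 * i' + 2 * q' + 3 + 1), fac_peel (2 * t' + 2 * i' + 2 * q' + 3),
        fac_peel (t' + i' + q' + 1)]
      have n1 := fac_ne (2 * q')
      have n2 := fac_ne q'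
      have n3 := fac_ne (2 * t' + 2 * i' + 2 * q' + 3)
      have n4 := fac_ne (t' + i' + 1)
      have n5 := fac_ne (2 * t' + 2 * i' + 3)
      have n6 := fac_ne (t' + i' + q' + 1)
      have p1 : (2 : ℝ) ^ (q' + 1) ≠ 0 := by positivity
      have p2 : (2 : ℝ) ^ q' ≠ 0 := by positivity
      have hD : ((2 * (t' + 1) + 2 * (i' + 1) + 2 * (q' + 1) : ℕ) : ℝ) - 1 ≠ 0 :=
        sub_ne_zero.mpr (by
          exact_mod_cast (show (2 * (t' + 1) + 2 * (i' + 1) + 2 * (q' + 1) : ℕ) ≠ 1 by omega))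
      apply clear_den hD
      push_cast
      field_simp
      ring
    · rcases Nat.lt_or_ge m (q' + 1) with hlt | hge
      · -- interior: 1 ≤ m ≤ q'
        obtain ⟨m', rfl⟩ : ∃ m', m = m' + 1 := ⟨m - 1, by omega⟩
        obtain ⟨r, rfl⟩ : ∃ r, q' = m' + 1 + r := ⟨q' - (m' + 1), by omega⟩
        have hc1 : 0 ≤ ((m' + 1 : ℕ) : ℤ) ∧ ((m' + 1 : ℕ) : ℤ) ≤ ((m' + 1 + r + 1 : ℕ) : ℤ) := by
          constructor <;> [positivity; exact_mod_cast by omega]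
        have hc2 : 0 ≤ ((m' + 1 : ℕ) : ℤ) - 1 ∧
            ((m' + 1 : ℕ) : ℤ) - 1 ≤ ((m' + 1 + r + 1 - 1 : ℕ) : ℤ) := by
          constructor <;> [push_cast; push_cast] <;> omega
        have hc3 : 0 ≤ ((m' + 1 : ℕ) : ℤ) ∧ ((m' + 1 : ℕ) : ℤ) ≤ ((m' + 1 + r + 1 - 1 : ℕ) : ℤ) := by
          constructor <;> [positivity; exact_mod_cast by omega]
        rw [hQ, hQ, hQ, if_pos hc1, if_pos hc2, if_pos hc3]
        have et : (((m' + 1 : ℕ) : ℤ) - 1).toNat = m' := by push_cast; omega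
        simp only [hsub, Int.toNat_natCast, et]
        have e1 : 2 * (m' + 1 + r + 1) - (m' + 1) = m' + 2 * r + 1 + 1 + 1 := by omega
        have e2 : m' + 1 + r + 1 - (m' + 1) = r + 1 := by omega
        have e3 : 2 * (t' + 1) + 2 * (i' + 1) + (m' + 1) - 1 =
            2 * t' + 2 * i' + m' + 3 + 1 := by omega
        have e4 : 2 * (t' + 1) + 2 * (i' + 1) + 2 * (m' + 1 + r + 1) - 1 =
            2 * t' + 2 * i' + 2 * m' + 2 * r + 5 + 1 + 1 := by omega
        have e5 : t' + 1 + (i' + 1) + (m' + 1 + r + 1) - 1 = t' + i' + m' + r + 2 + 1 := by omega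
        have e6 : t' + 1 + (i' + 1) - 1 = t' + i' + 1 := by omega
        have f1 : 2 * (m' + 1 + r) - m' = m' + 2 * r + 1 + 1 := by omega
        have f2 : m' + 1 + r - m' = r + 1 := by omega
        have f3 : 2 * (t' + 1) + 2 * (i' + 1) + m' - 1 = 2 * t' + 2 * i' + m' + 3 := by omega
        have f4 : 2 * (t' + 1) + 2 * (i' + 1) + 2 * (m' + 1 + r) - 1 =
            2 * t' + 2 * i' + 2 * m' + 2 * r + 5 := by omega
        have f5 : t' + 1 + (i' + 1) + (m' + 1 + r) - 1 = t' + i' + m' + r + 2 := by omega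
        have g1 : 2 * (m' + 1 + r) - (m' + 1) = m' + 2 * r + 1 := by omega
        have g2 : m' + 1 + r - (m' + 1) = r := by omega
        rw [e1, e2, e3, e4, e5, e6, f1, f2, f3, f4, f5, g1, g2]
        rw [fac_peel (m' + 2 * r + 1 + 1), fac_peel (m' + 2 * r + 1),
          fac_peel (2 * t' + 2 * i' + 2 * m' + 2 * r + 5 + 1),
          fac_peel (2 * t' + 2 * i' + 2 * m' + 2 * r + 5),
          fac_peel (2 * t' + 2 * i' + m' + 3), fac_peel (t' + i' + m' + r + 2),
          fac_peel m', fac_peel r]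
        have n1 := fac_ne (m' + 2 * r + 1)
        have n2 := fac_ne m'
        have n3 := fac_ne r
        have n4 := fac_ne (2 * t' + 2 * i' + 2 * m' + 2 * r + 5)
        have n5 := fac_ne (t' + i' + 1)
        have n6 := fac_ne (2 * t' + 2 * i' + m' + 3)
        have n7 := fac_ne (t' + i' + m' + r + 2)
        have p1 : (2 : ℝ) ^ (m' + 1 + r + 1) ≠ 0 := by positivity
        have p2 : (2 : ℝ) ^ (r + 1) ≠ 0 := by positivity
        have p3 : (2 : ℝ) ^ (m' + 1 + r) ≠ 0 := by positivity
        have p4 : (2 : ℝ) ^ r ≠ 0 := by positivity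
        have hD : ((2 * (t' + 1) + 2 * (i' + 1) + 2 * (m' + 1 + r + 1) : ℕ) : ℝ) - 1 ≠ 0 :=
        sub_ne_zero.mpr (by
          exact_mod_cast (show (2 * (t' + 1) + 2 * (i' + 1) + 2 * (m' + 1 + r + 1) : ℕ) ≠ 1 by omega))
        apply clear_den hD
        push_cast
        field_simp
        ring
      · -- m = q' + 1 case
        have hmq' : m = q' + 1 := by omega
        subst hmq'
        have hneg : ¬ (0 ≤ ((q' + 1 : ℕ) : ℤ) ∧ ((q' + 1 : ℕ) : ℤ) ≤ ((q' + 1 - 1 : ℕ) : ℤ)) := by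
          push_neg; intro h; push_cast; omega
        have hc1 : 0 ≤ ((q' + 1 : ℕ) : ℤ) ∧ ((q' + 1 : ℕ) : ℤ) ≤ ((q' + 1 : ℕ) : ℤ) := ⟨by positivity, le_refl _⟩
        have hc2 : 0 ≤ ((q' + 1 : ℕ) : ℤ) - 1 ∧
            ((q' + 1 : ℕ) : ℤ) - 1 ≤ ((q' + 1 - 1 : ℕ) : ℤ) := by
          constructor <;> push_cast <;> omega
        rw [hQ, hQ, hQ, if_pos hc1, if_pos hc2, if_neg hneg]
        have et : (((q' + 1 : ℕ) : ℤ) - 1).toNat = q' := by push_cast; omega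
        simp only [hsub, Int.toNat_natCast, et]
        have e1 : 2 * (q' + 1) - (q' + 1) = q' + 1 := by omega
        have e2 : q' + 1 - (q' + 1) = 0 := by omega
        have e3 : 2 * (t' + 1) + 2 * (i' + 1) + (q' + 1) - 1 =
            2 * t' + 2 * i' + q' + 3 + 1 := by omega
        have e4 : 2 * (t' + 1) + 2 * (i' + 1) + 2 * (q' + 1) - 1 =
            2 * t' + 2 * i' + 2 * q' + 3 + 1 + 1 := by omega
        have e5 : t' + 1 + (i' + 1) + (q' + 1) - 1 = t' + i' + q' + 1 + 1 := by omega
        have e6 : t' + 1 + (i' + 1) - 1 = t' + i' + 1 := by omega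
        have f1 : 2 * q' - q' = q' := by omega
        have f2 : q' - q' = 0 := by omega
        have f3 : 2 * (t' + 1) + 2 * (i' + 1) + q' - 1 = 2 * t' + 2 * i' + q' + 3 := by omega
        have f4 : 2 * (t' + 1) + 2 * (i' + 1) + 2 * q' - 1 = 2 * t' + 2 * i' + 2 * q' + 3 := by omega
        have f5 : t' + 1 + (i' + 1) + q' - 1 = t' + i' + q' + 1 := by omega
        rw [e1, e2, e3, e4, e5, e6, f1, f2, f3, f4, f5]
        rw [fac_peel q', fac_peel (2 * t' + 2 * i' + q' + 3),
          fac_peel (2 * t' + 2 * i' + 2 * q' + 3 + 1), fac_peel (2 * t' + 2 * i' + 2 * q' + 3),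
          fac_peel (t' + i' + q' + 1)]
        have n1 := fac_ne q'
        have n3 := fac_ne (2 * t' + 2 * i' + 2 * q' + 3)
        have n4 := fac_ne (t' + i' + 1)
        have n5 := fac_ne (2 * t' + 2 * i' + q' + 3)
        have n6 := fac_ne (t' + i' + q' + 1)
        have p1 : (2 : ℝ) ^ (q' + 1) ≠ 0 := by positivity
        have p2 : (2 : ℝ) ^ q' ≠ 0 := by positivity
        have hD : ((2 * (t' + 1) + 2 * (i' + 1) + 2 * (q' + 1) : ℕ) : ℝ) - 1 ≠ 0 :=
        sub_ne_zero.mpr (by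
          exact_mod_cast (show (2 * (t' + 1) + 2 * (i' + 1) + 2 * (q' + 1) : ℕ) ≠ 1 by omega))
        apply clear_den hD
        push_cast
        simp only [Nat.factorial_zero, pow_zero, Nat.cast_one]
        field_simp
        ring
end

section
/- Define c : [0, 1) → ℝ by c(x) = (3 - log₂ 3) - (2 - x - 2^(1-x)) + (1 - 2^(-x)) · (3/(2^x + 1) - 1) + 2^(log₂ 3 - x)/2292. Then c(x) ≥ 1.4005 for all x ∈ [0, 1). -/
open Real

/-- Key polynomial inequality, proved via Bernstein-basis certificates on two
subintervals of `[0, 0.6931472]`. -/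
theorem mergeInsertion_key_ineq (u : ℝ) (hu0 : 0 ≤ u) (hu1 : u ≤ 0.6931472) :
    6 ≤ (6 - 485/306 + (10000000/6931472)*u
        + (1 - u + u^2/2 - u^3/6 + u^4/24 - u^5/120 - 7*u^6/4320)/764 - 1.4005)
      * (1 + (1 - u + u^2/2 - u^3/6 + u^4/24 - u^5/120 - 7*u^6/4320)) := by
  rcases le_total u 0.3465736 with h | h
  · have hb : (0:ℝ) ≤ 0.3465736 - u := by linarith
    linarith [mul_nonneg (pow_nonneg hu0 0) (pow_nonneg hb 12),
      mul_nonneg (pow_nonneg hu0 1) (pow_nonneg hb 11),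
      mul_nonneg (pow_nonneg hu0 2) (pow_nonneg hb 10),
      mul_nonneg (pow_nonneg hu0 3) (pow_nonneg hb 9),
      mul_nonneg (pow_nonneg hu0 4) (pow_nonneg hb 8),
      mul_nonneg (pow_nonneg hu0 5) (pow_nonneg hb 7),
      mul_nonneg (pow_nonneg hu0 6) (pow_nonneg hb 6),
      mul_nonneg (pow_nonneg hu0 7) (pow_nonneg hb 5),
      mul_nonneg (pow_nonneg hu0 8) (pow_nonneg hb 4),
      mul_nonneg (pow_nonneg hu0 9) (pow_nonneg hb 3),
      mul_nonneg (pow_nonneg hu0 10) (pow_nonneg hb 2),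
      mul_nonneg (pow_nonneg hu0 11) (pow_nonneg hb 1),
      mul_nonneg (pow_nonneg hu0 12) (pow_nonneg hb 0)]
  · have ha : (0:ℝ) ≤ u - 0.3465736 := by linarith
    have hb : (0:ℝ) ≤ 0.6931472 - u := by linarith
    linarith [mul_nonneg (pow_nonneg ha 0) (pow_nonneg hb 12),
      mul_nonneg (pow_nonneg ha 1) (pow_nonneg hb 11),
      mul_nonneg (pow_nonneg ha 2) (pow_nonneg hb 10),
      mul_nonneg (pow_nonneg ha 3) (pow_nonneg hb 9),
      mul_nonneg (pow_nonneg ha 4) (pow_nonneg hb 8),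
      mul_nonneg (pow_nonneg ha 5) (pow_nonneg hb 7),
      mul_nonneg (pow_nonneg ha 6) (pow_nonneg hb 6),
      mul_nonneg (pow_nonneg ha 7) (pow_nonneg hb 5),
      mul_nonneg (pow_nonneg ha 8) (pow_nonneg hb 4),
      mul_nonneg (pow_nonneg ha 9) (pow_nonneg hb 3),
      mul_nonneg (pow_nonneg ha 10) (pow_nonneg hb 2),
      mul_nonneg (pow_nonneg ha 11) (pow_nonneg hb 1),
      mul_nonneg (pow_nonneg ha 12) (pow_nonneg hb 0)]

/-- Degree-6 Taylor lower bound for `exp (-u)`. -/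
theorem mergeInsertion_exp_lb (u : ℝ) (hu0 : 0 ≤ u) (hu1 : u ≤ 1) :
    1 - u + u^2/2 - u^3/6 + u^4/24 - u^5/120 - 7*u^6/4320 ≤ Real.exp (-u) := by
  have habs : |(-u)| ≤ 1 := by rw [abs_neg, abs_of_nonneg hu0]; linarith
  have hexp := Real.exp_bound habs (n := 6) (by norm_num)
  have hsum : ∑ m ∈ Finset.range 6, (-u)^m / m.factorial
      = 1 - u + u^2/2 - u^3/6 + u^4/24 - u^5/120 := by
    simp [Finset.sum_range_succ, Nat.factorial]
    ring
  rw [hsum, abs_neg, abs_of_nonneg hu0] at hexp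
  have h2 := (abs_sub_le_iff.1 hexp).2
  norm_num [Nat.factorial] at h2
  nlinarith [h2]

/-- The coefficient function `c` from Theorem 3 of the paper satisfies
`c(x) ≥ 1.4005` on `[0, 1)`. -/
theorem mergeInsertion_c_lower_bound (c : ℝ → ℝ)
    (hc : ∀ x : ℝ, c x =
      (3 - Real.logb 2 3) - (2 - x - (2 : ℝ) ^ (1 - x)) +
        (1 - (2 : ℝ) ^ (-x)) * (3 / ((2 : ℝ) ^ x + 1) - 1) +
        (2 : ℝ) ^ (Real.logb 2 3 - x) / 2292) :
    ∀ x : ℝ, 0 ≤ x → x < 1 → c x ≥ 1.4005 := by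
  intro x hx0 hx1
  have h2 : (0:ℝ) < 2 := two_pos
  have ha : 0 < (2:ℝ) ^ x := Real.rpow_pos_of_pos h2 x
  obtain ⟨a, ha_def⟩ : ∃ a : ℝ, a = (2:ℝ) ^ x := ⟨_, rfl⟩
  rw [← ha_def] at ha
  have h1x : (2:ℝ)^(1-x) = 2/a := by rw [ha_def, Real.rpow_sub h2, Real.rpow_one]
  have hnx : (2:ℝ)^(-x) = 1/a := by rw [ha_def, Real.rpow_neg (le_of_lt h2), one_div]
  have hlx : (2:ℝ)^(Real.logb 2 3 - x) = 3/a := by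
    rw [ha_def, Real.rpow_sub h2, Real.rpow_logb h2 (by norm_num) (by norm_num)]
  have hform : c x = 6 - Real.logb 2 3 + x - 6/(1+1/a) + (1/a)/764 := by
    rw [hc, h1x, hnx, hlx, ← ha_def]
    have h1 : a + 1 ≠ 0 := by positivity
    have h3 : 1 + 1/a ≠ 0 := by positivity
    field_simp
    ring
  have hlogb : Real.logb 2 3 < 485/306 := by
    rw [Real.logb, div_lt_iff₀ (Real.log_pos one_lt_two)]
    have h3 : Real.log (3^306) < Real.log (2^485) :=
      Real.log_lt_log (by positivity) (by exact_mod_cast (by decide : (3:ℕ)^306 < 2^485))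
    rw [Real.log_pow, Real.log_pow] at h3
    push_cast at h3
    linarith
  -- the quantity s = 2 ^ (-x) = exp (-(log 2 * x))
  have hs : 1/a = Real.exp (-(Real.log 2 * x)) := by
    rw [ha_def, Real.rpow_def_of_pos h2, one_div, ← Real.exp_neg]
  obtain ⟨u, hu_def⟩ : ∃ u : ℝ, u = 0.6931472 * x := ⟨_, rfl⟩
  have hu0 : 0 ≤ u := by rw [hu_def]; positivity
  have hu1 : u ≤ 0.6931472 := by rw [hu_def]; nlinarith
  obtain ⟨p, hp_def⟩ :
      ∃ p : ℝ, p = 1 - u + u^2/2 - u^3/6 + u^4/24 - u^5/120 - 7*u^6/4320 := ⟨_, rfl⟩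
  have hsp : p ≤ 1/a := by
    rw [hp_def, hs]
    calc 1 - u + u^2/2 - u^3/6 + u^4/24 - u^5/120 - 7*u^6/4320
        ≤ Real.exp (-u) := mergeInsertion_exp_lb u hu0 (by linarith)
      _ ≤ Real.exp (-(Real.log 2 * x)) := by
          apply Real.exp_le_exp.2
          have := Real.log_two_lt_d9
          rw [hu_def] at hu0 ⊢
          nlinarith
  have hkey : 6 ≤ (6 - 485/306 + (10000000/6931472)*u + p/764 - 1.4005) * (1+p) := by
    rw [hp_def]; exact mergeInsertion_key_ineq u hu0 hu1
  have hxu : x = (10000000/6931472) * u := by rw [hu_def]; ring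
  have hb : (0:ℝ) ≤ 0.6931472 - u := by linarith
  have hp_pos : 0 < 1 + p := by
    rw [hp_def]
    linarith [mul_nonneg hu0 hb, mul_nonneg (mul_nonneg hu0 hu0) hb,
      mul_nonneg (pow_nonneg hu0 3) hb, mul_nonneg (pow_nonneg hu0 4) hb,
      mul_nonneg (pow_nonneg hu0 5) hb, pow_nonneg hu0 2, pow_nonneg hu0 3,
      pow_nonneg hu0 4, pow_nonneg hu0 5, pow_nonneg hu0 6,
      mul_nonneg hu0 hu0]
  have hsa : 0 < 1 + 1/a := by positivity
  have hps : 1 + p ≤ 1 + 1/a := by linarith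
  -- from the key inequality
  have hdiv : 6/(1+p) ≤ 6 - 485/306 + x + p/764 - 1.4005 := by
    rw [div_le_iff₀ hp_pos, hxu]
    linarith [hkey]
  have hdiv2 : 6/(1+1/a) ≤ 6/(1+p) := by gcongr
  have h764 : p/764 ≤ (1/a)/764 := by linarith
  rw [hform]
  linarith [hdiv, hdiv2, hlogb, h764]
end

section
/- For every integer m ≥ 2, the quantity T(m) = ⌈log₂ m⌉ + 1 - 2^(⌈log₂ m⌉)/m satisfies log₂ m ≤ T(m) ≤ log₂ m + 1 - (1 + ln(ln 2))/ln 2, and T(m) = log₂ m exactly when m is a power of 2. -/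
open Real Nat

lemma chord_strict {x : ℝ} (h1 : 1 < x) (h2 : x < 2) :
    (x - 1) * Real.log 2 < Real.log x := by
  have := strictConcaveOn_log_Ioi.2 (Set.mem_Ioi.2 one_pos)
    (Set.mem_Ioi.2 two_pos) (by norm_num : (1:ℝ) ≠ 2)
    (show (0:ℝ) < 2 - x by linarith) (show (0:ℝ) < x - 1 by linarith) (by ring)
  simp only [smul_eq_mul, Real.log_one, mul_zero, zero_add, mul_one] at this
  have hx : 2 - x + (x - 1) * 2 = x := by ring
  rw [hx] at this
  exact this

/-- The average binary-insertion cost `T(m) = ⌈log₂ m⌉ + 1 - 2^⌈log₂ m⌉/m`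
satisfies `log₂ m ≤ T(m) ≤ log₂ m + 1 - (1 + ln ln 2)/ln 2` for all integers
`m ≥ 2`, with equality `T(m) = log₂ m` exactly when `m` is a power of `2`. -/
theorem binaryInsertion_avg_cost_bounds (m : ℕ) (hm : 2 ≤ m) :
    Real.logb 2 m ≤ (Nat.clog 2 m : ℝ) + 1 - 2 ^ Nat.clog 2 m / m ∧
      (Nat.clog 2 m : ℝ) + 1 - 2 ^ Nat.clog 2 m / m ≤
        Real.logb 2 m + 1 - (1 + Real.log (Real.log 2)) / Real.log 2 ∧
      ((Nat.clog 2 m : ℝ) + 1 - 2 ^ Nat.clog 2 m / m = Real.logb 2 m ↔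
        ∃ j : ℕ, m = 2 ^ j) := by
  have h2 : (1:ℕ) < 2 := one_lt_two
  set k := Nat.clog 2 m with hk
  have hmle : (m:ℝ) ≤ 2 ^ k := by exact_mod_cast Nat.le_pow_clog h2 m
  have hkpos : 1 ≤ k := Nat.clog_pos h2 (by omega)
  have hmgt : (2:ℝ) ^ (k-1) < m := by exact_mod_cast Nat.pow_pred_clog_lt_self h2 (by omega)
  have hm0 : (0:ℝ) < m := by positivity
  set x : ℝ := 2 ^ k / m with hxdef
  have hx1 : 1 ≤ x := (one_le_div hm0).2 hmle
  have hx0 : 0 < x := by linarith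
  have hx2 : x < 2 := by
    rw [hxdef, div_lt_iff₀ hm0]
    have hpk : (2:ℝ) ^ k = 2 ^ (k-1) * 2 := by
      rw [← pow_succ]; congr 1; omega
    rw [hpk]; nlinarith
  set L := Real.log 2 with hL
  have hL0 : 0 < L := Real.log_pos one_lt_two
  have hlogx : Real.log x = k * L - Real.log m := by
    rw [hxdef, Real.log_div (by positivity) (ne_of_gt hm0), Real.log_pow]
  have hlogb : Real.logb 2 (m:ℝ) = k - Real.log x / L := by
    rw [Real.logb, hlogx, ← hL]; field_simp; ring
  refine ⟨?_, ?_, ?_⟩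
  · -- lower bound
    have key1 : (x - 1) * L ≤ Real.log x := by
      rcases eq_or_lt_of_le hx1 with h | h
      · simp [← h]
      · exact le_of_lt (chord_strict h hx2)
    have h' : x - 1 ≤ Real.log x / L := (le_div_iff₀ hL0).2 key1
    rw [hlogb]; linarith
  · -- upper bound
    have key2 : Real.log x + Real.log L ≤ x * L - 1 := by
      have := Real.log_le_sub_one_of_pos (by positivity : (0:ℝ) < x * L)
      rw [Real.log_mul (ne_of_gt hx0) (ne_of_gt hL0)] at this
      linarith
    have h' : (1 + Real.log L) / L ≤ x - Real.log x / L := by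
      rw [div_le_iff₀ hL0, sub_mul, div_mul_cancel₀ _ (ne_of_gt hL0)]
      linarith
    rw [hlogb]; linarith
  · constructor
    · intro heq
      rw [hlogb] at heq
      have hlx : Real.log x = (x - 1) * L := by
        field_simp at heq; nlinarith
      have hx1' : x = 1 := by
        by_contra hne
        have h : 1 < x := lt_of_le_of_ne hx1 (Ne.symm hne)
        have := chord_strict h hx2
        linarith
      refine ⟨k, ?_⟩
      have : (m:ℝ) = 2 ^ k := by
        rw [hxdef, div_eq_one_iff_eq (ne_of_gt hm0)] at hx1'
        linarith
      have h' : (2:ℕ) ^ k = m := by exact_mod_cast this.symm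
      omega
    · rintro ⟨j, rfl⟩
      have hkj : k = j := by rw [hk, Nat.clog_pow 2 j h2]
      have hx1' : x = 1 := by
        rw [hxdef, hkj, div_eq_one_iff_eq (ne_of_gt hm0)]
        push_cast; ring
      rw [hlogb, hx1']
      simp
end

section
/- For positive integers m, let k_m be the unique integer with t_{k_m - 1} ≤ m < t_{k_m}, where t_k = (2^(k+1)+(-1)^k)/3, and let l_m = ⌊log₂(3m)⌋. Then l_m ≤ k_m, and if t_{k_m - 1} < m < t_{k_m} then k_m = l_m. -/
open Nat

/-- For `m ≥ 1`, if `k_m` is the (unique) index with `t_{k_m-1} ≤ m < t_{k_m}`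
(where `t_k = (2^(k+1)+(-1)^k)/3`), and `l_m = ⌊log₂(3m)⌋`, then `l_m ≤ k_m`,
and if moreover `t_{k_m-1} < m` then `k_m = l_m`. -/
theorem mergeInsertion_batch_index_vs_log (t : ℕ → ℤ)
    (ht : ∀ k : ℕ, 3 * t k = 2 ^ (k + 1) + (-1) ^ k)
    (m km : ℕ) (hm : 1 ≤ m) (hkm : 2 ≤ km)
    (h₁ : t (km - 1) ≤ (m : ℤ)) (h₂ : (m : ℤ) < t km) :
    Nat.log 2 (3 * m) ≤ km ∧ (t (km - 1) < (m : ℤ) → km = Nat.log 2 (3 * m)) := by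
  have hA : (3 * m : ℤ) < 2 ^ (km + 1) := by
    have h3 : (3 * m : ℤ) < 2 ^ (km + 1) + (-1) ^ km := by
      have := ht km
      nlinarith
    rcases Nat.even_or_odd km with he | ho
    · rw [he.neg_one_pow] at h3
      have hle : (3 * m : ℤ) ≤ 2 ^ (km + 1) := by linarith
      rcases lt_or_eq_of_le hle with h | h
      · exact h
      · exfalso
        have hdvd : (3 : ℤ) ∣ 2 ^ (km + 1) := ⟨m, h.symm⟩
        have := Int.Prime.dvd_pow' (by norm_num) hdvd
        norm_num at this
    · rw [ho.neg_one_pow] at h3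
      linarith
  have hAn : 3 * m < 2 ^ (km + 1) := by exact_mod_cast hA
  have hlog_le : Nat.log 2 (3 * m) ≤ km := by
    have := Nat.log_lt_of_lt_pow (by omega : 3 * m ≠ 0) hAn
    omega
  refine ⟨hlog_le, fun hlt => ?_⟩
  have hB : (2 : ℤ) ^ km ≤ 3 * m := by
    have h3 : (2 : ℤ) ^ ((km - 1) + 1) + (-1) ^ (km - 1) + 3 ≤ 3 * m := by
      have := ht (km - 1)
      have : 3 * t (km - 1) + 3 ≤ 3 * m := by linarith
      linarith [ht (km - 1)]
    have hk1 : km - 1 + 1 = km := by omega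
    rw [hk1] at h3
    rcases Nat.even_or_odd (km - 1) with he | ho
    · rw [he.neg_one_pow] at h3; linarith
    · rw [ho.neg_one_pow] at h3; linarith
  have hBn : 2 ^ km ≤ 3 * m := by exact_mod_cast hB
  have := (Nat.le_log_iff_pow_le (by norm_num) (by omega : 3 * m ≠ 0)).mpr hBn
  omega
end

section
/- Let k ≥ 2, t = t_{k-1} = (2^k + (-1)^{k-1})/3, and for i ≥ 1 let P(X_i = 2t + i - 1) = 1/(2t + 2i - 1) and P(X_i = j) = ((2t+2i-2)/(2t+2i-1)) · P(X_{i-1} = j) for 0 ≤ j < 2t + i - 1, with P(X_1 = j) = 1/(2t+1) for 0 ≤ j ≤ 2t. Then P(X_i = j) is constant in j for 0 ≤ j ≤ 2t, and P(X_i = j) is non-increasing in j for each fixed i. -/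
open Nat

/-- Properties of the position distribution `P(X_i = j)` in batch `k` of
MergeInsertion (with `t = t_{k-1}`): defined by `P(X_1 = j) = 1/(2t+1)` for
`j ≤ 2t`, `P(X_i = 2t+i-1) = 1/(2t+2i-1)` and
`P(X_i = j) = ((2t+2i-2)/(2t+2i-1))·P(X_{i-1} = j)` for `j < 2t+i-1`, it is
constant in `j` on `0 ≤ j ≤ 2t` and non-increasing in `j` (on the support
`0 ≤ j ≤ 2t+i-1`) for each fixed `i`. -/
theorem mergeInsertion_Xi_monotone (k : ℕ) (hk : 2 ≤ k) (t : ℕ)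
    (ht : (3 : ℤ) * t = 2 ^ k + (-1) ^ (k - 1))
    (P : ℕ → ℕ → ℝ)
    (hbase : ∀ j : ℕ, j ≤ 2 * t → P 1 j = 1 / (2 * (t : ℝ) + 1))
    (htop : ∀ i : ℕ, 2 ≤ i → P i (2 * t + i - 1) = 1 / (2 * (t : ℝ) + 2 * i - 1))
    (hrec : ∀ i : ℕ, 2 ≤ i → ∀ j : ℕ, j < 2 * t + i - 1 →
      P i j = ((2 * (t : ℝ) + 2 * i - 2) / (2 * (t : ℝ) + 2 * i - 1)) * P (i - 1) j) :
    (∀ i : ℕ, 1 ≤ i → ∀ j₁ j₂ : ℕ, j₁ ≤ 2 * t → j₂ ≤ 2 * t → P i j₁ = P i j₂) ∧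
      (∀ i : ℕ, 1 ≤ i → ∀ j₁ j₂ : ℕ, j₁ ≤ j₂ → j₂ ≤ 2 * t + i - 1 →
        P i j₂ ≤ P i j₁) := by
  have htR : (0:ℝ) ≤ (t:ℝ) := Nat.cast_nonneg t
  have key : ∀ n : ℕ,
      (∀ j₁ j₂ : ℕ, j₁ ≤ 2*t → j₂ ≤ 2*t → P (n+1) j₁ = P (n+1) j₂) ∧
      (∀ j₁ j₂ : ℕ, j₁ ≤ j₂ → j₂ ≤ 2*t+n → P (n+1) j₂ ≤ P (n+1) j₁) ∧
      P (n+1) (2*t+n) = 1/(2*(t:ℝ)+2*n+1) := by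
    intro n
    induction n with
    | zero =>
      refine ⟨fun j₁ j₂ h1 h2 => ?_, fun j₁ j₂ h1 h2 => ?_, ?_⟩
      · rw [hbase j₁ h1, hbase j₂ h2]
      · rw [hbase j₁ (le_trans h1 (by omega)), hbase j₂ (by omega)]
      · simp only [Nat.add_zero, Nat.zero_eq]
        rw [hbase (2*t) le_rfl]; norm_num
    | succ n ih =>
      obtain ⟨hA, hB, hD⟩ := ih
      have h2i : 2 ≤ n+2 := by omega
      have hrec' : ∀ j : ℕ, j < 2*t+n+1 →
          P (n+2) j = ((2*(t:ℝ)+2*n+2)/(2*(t:ℝ)+2*n+3)) * P (n+1) j := by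
        intro j hj
        have h := hrec (n+2) h2i j (by omega)
        have e : ((2*(t:ℝ)+2*(↑(n+2):ℝ)-2)/(2*(t:ℝ)+2*(↑(n+2):ℝ)-1))
            = ((2*(t:ℝ)+2*n+2)/(2*(t:ℝ)+2*n+3)) := by push_cast; ring_nf
        rw [h, e]; norm_num
      have htop' : P (n+2) (2*t+n+1) = 1/(2*(t:ℝ)+2*n+3) := by
        have h := htop (n+2) h2i
        have e : 2*t+(n+2)-1 = 2*t+n+1 := by omega
        rw [e] at h
        rw [h]; push_cast; ring_nf
      have hr : (0:ℝ) ≤ (2*(t:ℝ)+2*n+2)/(2*(t:ℝ)+2*n+3) := by positivity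
      have hkey : 1/(2*(t:ℝ)+2*n+3)
          ≤ ((2*(t:ℝ)+2*n+2)/(2*(t:ℝ)+2*n+3)) * (1/(2*(t:ℝ)+2*n+1)) := by
        rw [_root_.div_mul_div_comm, mul_one, div_le_div_iff₀ (by linarith) (by positivity)]
        nlinarith
      refine ⟨fun j₁ j₂ h1 h2 => ?_, fun j₁ j₂ h1 h2 => ?_, ?_⟩
      · rw [hrec' j₁ (by omega), hrec' j₂ (by omega), hA j₁ j₂ h1 h2]
      · rcases lt_or_eq_of_le (show j₂ ≤ 2*t+n+1 by omega) with hj2 | hj2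
        · rw [hrec' j₁ (by omega), hrec' j₂ hj2]
          exact mul_le_mul_of_nonneg_left (hB j₁ j₂ h1 (by omega)) hr
        · rcases eq_or_lt_of_le h1 with rfl | hj1
          · exact le_refl _
          · rw [hj2, htop', hrec' j₁ (by omega)]
            calc 1/(2*(t:ℝ)+2*n+3)
                ≤ ((2*(t:ℝ)+2*n+2)/(2*(t:ℝ)+2*n+3)) * (1/(2*(t:ℝ)+2*n+1)) := hkey
              _ = ((2*(t:ℝ)+2*n+2)/(2*(t:ℝ)+2*n+3)) * P (n+1) (2*t+n) := by rw [hD]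
              _ ≤ ((2*(t:ℝ)+2*n+2)/(2*(t:ℝ)+2*n+3)) * P (n+1) j₁ :=
                  mul_le_mul_of_nonneg_left (hB j₁ (2*t+n) (by omega) (le_refl _)) hr
      · rw [show 2*t+(n+1) = 2*t+n+1 from rfl, htop']; push_cast; ring_nf
  constructor
  · intro i hi j₁ j₂ h1 h2
    obtain ⟨n, rfl⟩ : ∃ n, i = n+1 := ⟨i-1, by omega⟩
    exact (key n).1 j₁ j₂ h1 h2
  · intro i hi j₁ j₂ h1 h2
    obtain ⟨n, rfl⟩ : ∃ n, i = n+1 := ⟨i-1, by omega⟩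
    exact (key n).2.1 j₁ j₂ h1 (by omega)
end

section
/- Suppose the number of comparisons of a sorting algorithm satisfies F(n) = ⌊n/2⌋ + F(⌊n/2⌋) + G(⌈n/2⌉) with F(1) = 0, and suppose G(m) ≤ k_m·(m - t_{k_m - 1}) + ∑_{1 ≤ k < k_m} k·(t_k - t_{k-1}) where t_k = (2^(k+1)+(-1)^k)/3 and t_{k_m - 1} ≤ m < t_{k_m}. Then F(n) ≤ n log₂ n - (3 - log₂ 3)·n + n·(y + 1 - 2^y) + O(log n), where y = ⌈log₂(3n/4)⌉ - log₂(3n/4) ∈ [0, 1). -/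
open Nat Real Finset

private lemma pow2_mod3 (k : ℕ) : 2^k % 3 = 1 ∨ 2^k % 3 = 2 := by
  induction k with
  | zero => left; rfl
  | succ n ih => rw [pow_succ]; omega

private lemma three_mul_ne_pow2 (x k : ℕ) : 3 * x ≠ 2^k := by
  have := pow2_mod3 k; omega

private def Wf (n : ℕ) : ℕ := Nat.log 2 (3 * n) - 1

private lemma Wf_spec (n : ℕ) (hn : 1 ≤ n) :
    2 ^ (Wf n + 1) < 3 * n ∧ 3 * n < 2 ^ (Wf n + 2) := by
  have h0 : 3 * n ≠ 0 := by omega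
  have h1 : 2 ^ (Nat.log 2 (3 * n)) ≤ 3 * n := Nat.pow_log_le_self 2 h0
  have h2 : 3 * n < 2 ^ (Nat.log 2 (3 * n) + 1) := Nat.lt_pow_succ_log_self (by norm_num) _
  have hlog : 1 ≤ Nat.log 2 (3 * n) := by
    have : (2:ℕ) ^ 1 ≤ 3 * n := by omega
    exact (Nat.le_log_iff_pow_le (by norm_num) h0).mpr this
  have hw : Wf n + 1 = Nat.log 2 (3 * n) := by unfold Wf; omega
  have hne := three_mul_ne_pow2 n (Nat.log 2 (3 * n))
  constructor
  · rw [hw]; omega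
  · have : Wf n + 2 = Nat.log 2 (3 * n) + 1 := by omega
    rw [this]; exact h2

private lemma W_unique {x a b : ℕ} (ha1 : 2^(a+1) < x) (ha2 : x < 2^(a+2))
    (hb1 : 2^(b+1) < x) (hb2 : x < 2^(b+2)) : a = b := by
  by_contra h
  rcases Nat.lt_or_ge a b with hab | hab
  · have : 2^(a+2) ≤ 2^(b+1) := Nat.pow_le_pow_right (by norm_num) (by omega)
    omega
  · have hba : b < a := by omega
    have : 2^(b+2) ≤ 2^(a+1) := Nat.pow_le_pow_right (by norm_num) (by omega)
    omega

private def cpar (K : ℕ) : ℝ := if Even K then 0 else 1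

private lemma cpar_nonneg (K : ℕ) : 0 ≤ cpar K := by unfold cpar; split <;> norm_num

private lemma cpar_le_one (K : ℕ) : cpar K ≤ 1 := by unfold cpar; split <;> norm_num

private lemma neg_one_pow_eq (K : ℕ) : ((-1:ℝ))^K = 1 - 2 * cpar K := by
  rcases Nat.even_or_odd K with h | h
  · rw [h.neg_one_pow]; simp [cpar, h]
  · rw [h.neg_one_pow]; norm_num [cpar, Nat.not_even_iff_odd.2 h]

private lemma cpar_succ (K : ℕ) : cpar (K+1) = 1 - cpar K := by
  rcases Nat.even_or_odd K with h | h
  · simp [cpar, h, Nat.even_add_one, Nat.not_even_iff_odd.2 (Even.add_one h)]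
  · simp [cpar, Nat.not_even_iff_odd.2 h, Nat.even_add_one]

private lemma neg_one_pow_int (K : ℕ) : ((-1:ℤ))^K = 1 ∨ ((-1:ℤ))^K = -1 := by
  rcases Nat.even_or_odd K with h | h
  · left; exact h.neg_one_pow
  · right; exact h.neg_one_pow

private lemma sum_closed (t : ℕ → ℕ)
    (htR : ∀ k : ℕ, (3 : ℝ) * t k = 2 ^ (k + 1) + (-1) ^ k) (K : ℕ) :
    3 * ∑ k ∈ Finset.Icc 1 K, (k : ℝ) * ((t k : ℝ) - (t (k - 1) : ℝ)) =
      3 * K * (t K : ℝ) - 2 ^ (K + 1) + 2 - cpar K := by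
  induction K with
  | zero => simp [cpar]
  | succ K ih =>
    rw [Finset.sum_Icc_succ_top (by omega : 1 ≤ K + 1)]
    simp only [Nat.add_sub_cancel]
    have h1 := htR K
    have h3 := cpar_succ K
    have h4 := neg_one_pow_eq K
    push_cast
    push_cast at ih
    linear_combination ih - h1 + h3 - h4

private lemma G_le_phi (t : ℕ → ℕ)
    (ht : ∀ k : ℕ, (3 : ℤ) * t k = 2 ^ (k + 1) + (-1) ^ k) (G : ℕ → ℝ)
    (hG : ∀ m : ℕ, 1 ≤ m → ∀ km : ℕ, 1 ≤ km → t (km - 1) ≤ m → m < t km →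
      G m ≤ (km : ℝ) * ((m : ℝ) - (t (km - 1) : ℝ)) +
        ∑ k ∈ Finset.Icc 1 (km - 1), (k : ℝ) * ((t k : ℝ) - (t (k - 1) : ℝ)))
    (m Wm : ℕ) (hm : 1 ≤ m) (h1 : 2 ^ (Wm + 1) < 3 * m) (h2 : 3 * m < 2 ^ (Wm + 2)) :
    G m ≤ ((Wm : ℝ) + 1) * m - (4/3) * 2 ^ Wm + 2/3 := by
  have htR : ∀ k : ℕ, (3 : ℝ) * t k = 2 ^ (k + 1) + (-1) ^ k := by
    intro k; exact_mod_cast ht k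
  have h1z : (2:ℤ) ^ (Wm + 1) < 3 * m := by exact_mod_cast h1
  have h2z : (3:ℤ) * m < 2 ^ (Wm + 2) := by exact_mod_cast h2
  have hp2 : (2:ℤ) ^ (Wm + 2) = 2 * 2 ^ (Wm + 1) := by ring
  have hp3 : (2:ℤ) ^ (Wm + 3) = 4 * 2 ^ (Wm + 1) := by ring
  by_cases hex : (3:ℤ) * m = 2 ^ (Wm + 2) - 1
  · -- exceptional case : km = Wm + 2
    have hW1 := ht (Wm + 1)
    have heq : (t (Wm + 1) : ℤ) = m := by
      rcases neg_one_pow_int (Wm + 1) with h | h <;> rw [h] at hW1 <;> omega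
    have hlt : (m : ℤ) < t (Wm + 2) := by
      have hW2 := ht (Wm + 2)
      rcases neg_one_pow_int (Wm + 2) with h | h <;> rw [h] at hW2 <;> omega
    have e21 : Wm + 2 - 1 = Wm + 1 := rfl
    have hle1 : t (Wm + 2 - 1) ≤ m := by
      rw [e21]; exact_mod_cast le_of_eq heq
    have hlt1 : m < t (Wm + 2) := by exact_mod_cast hlt
    have hbound := hG m hm (Wm + 2) (by omega) hle1 hlt1
    rw [e21] at hbound
    have hsum := sum_closed t htR (Wm + 1)
    have heqR : (t (Wm + 1) : ℝ) = m := by exact_mod_cast heq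
    rw [heqR] at hbound hsum
    push_cast at hsum
    have hc0 := cpar_nonneg (Wm + 1)
    calc G m ≤ _ := hbound
      _ = ((Wm : ℝ) + 1) * m - (4/3) * 2 ^ Wm + 2/3 - cpar (Wm + 1) / 3 := by
          push_cast
          linear_combination (1/3 : ℝ) * hsum
      _ ≤ ((Wm : ℝ) + 1) * m - (4/3) * 2 ^ Wm + 2/3 := by linarith
  · -- generic case : km = Wm + 1
    have hW0 := ht Wm
    have hW1 := ht (Wm + 1)
    have hle1 : t ((Wm + 1) - 1) ≤ m := by
      simp only [Nat.add_sub_cancel]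
      have : (t Wm : ℤ) ≤ m := by
        rcases neg_one_pow_int Wm with h | h <;> rw [h] at hW0 <;> omega
      exact_mod_cast this
    have hlt1 : m < t (Wm + 1) := by
      have : (m:ℤ) < t (Wm + 1) := by
        rcases neg_one_pow_int (Wm + 1) with h | h <;> rw [h] at hW1 <;> omega
      exact_mod_cast this
    have hbound := hG m hm (Wm + 1) (by omega) hle1 hlt1
    have e11 : Wm + 1 - 1 = Wm := rfl
    rw [e11] at hbound
    have hsum := sum_closed t htR Wm
    push_cast at hsum
    have hc1 := cpar_le_one Wm
    have hW0R := htR Wm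
    have hnp := neg_one_pow_eq Wm
    rw [hnp] at hW0R
    calc G m ≤ _ := hbound
      _ = ((Wm : ℝ) + 1) * m - (4/3) * 2 ^ Wm + 2/3 - (1 - cpar Wm) / 3 := by
          push_cast
          linear_combination (1/3 : ℝ) * hsum - hW0R / 3
      _ ≤ ((Wm : ℝ) + 1) * m - (4/3) * 2 ^ Wm + 2/3 := by linarith

private lemma main_ind (F G : ℕ → ℝ) (hF1 : F 1 = 0)
    (hFrec : ∀ n : ℕ, 2 ≤ n → F n = ((n / 2 : ℕ) : ℝ) + F (n / 2) + G ((n + 1) / 2))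
    (hphi : ∀ m Wm : ℕ, 1 ≤ m → 2 ^ (Wm + 1) < 3 * m → 3 * m < 2 ^ (Wm + 2) →
      G m ≤ ((Wm : ℝ) + 1) * m - (4/3) * 2 ^ Wm + 2/3) :
    ∀ n : ℕ, 2 ≤ n →
      F n ≤ (n : ℝ) * (Wf n) - (4/3) * 2 ^ (Wf n) + 2 * Real.logb 2 n := by
  intro n
  induction n using Nat.strong_induction_on with
  | _ n ih =>
  intro hn
  rcases Nat.lt_or_ge n 4 with h4 | h4
  · interval_cases n
    · -- n = 2
      have hw : Wf 2 = 1 :=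
        W_unique (Wf_spec 2 (by norm_num)).1 (Wf_spec 2 (by norm_num)).2
          (by norm_num) (by norm_num)
      have hrec2 := hFrec 2 (by norm_num)
      norm_num at hrec2
      have hg1 := hphi 1 0 (by norm_num) (by norm_num) (by norm_num)
      norm_num at hg1
      rw [hw, hrec2, hF1]
      have hl : Real.logb 2 2 = 1 := Real.logb_self_eq_one (by norm_num)
      push_cast
      rw [hl]
      linarith
    · -- n = 3
      have hw : Wf 3 = 2 :=
        W_unique (Wf_spec 3 (by norm_num)).1 (Wf_spec 3 (by norm_num)).2
          (by norm_num) (by norm_num)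
      have hrec3 := hFrec 3 (by norm_num)
      norm_num at hrec3
      have hg2 := hphi 2 1 (by norm_num) (by norm_num) (by norm_num)
      norm_num at hg2
      rw [hw, hrec3, hF1]
      have hl9 : (3:ℝ) ≤ 2 * Real.logb 2 3 := by
        have h8 : Real.logb 2 8 = 3 := by
          rw [show (8:ℝ) = 2 ^ (3:ℕ) by norm_num, Real.logb_pow,
            Real.logb_self_eq_one (by norm_num)]
          norm_num
        have h9 : Real.logb 2 9 = 2 * Real.logb 2 3 := by
          rw [show (9:ℝ) = 3 ^ (2:ℕ) by norm_num, Real.logb_pow]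
          norm_num
        have hmono : Real.logb 2 8 ≤ Real.logb 2 9 := by
          gcongr <;> norm_num
        rw [h8, h9] at hmono; linarith
      push_cast
      linarith
  · -- n ≥ 4
    have hm2 : 2 ≤ n / 2 := by omega
    obtain ⟨hA1, hA2⟩ := Wf_spec (n / 2) (by omega)
    have IH := ih (n / 2) (by omega) hm2
    have hrec := hFrec n (by omega)
    have hlogm : Real.logb 2 (↑(n / 2) : ℝ) ≤ Real.logb 2 n - 1 := by
      have h2m : ((n / 2 : ℕ) : ℝ) ≤ (n : ℝ) / 2 := by
        have hh : 2 * (n / 2) ≤ n := by omega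
        have := (Nat.cast_le (α := ℝ)).2 hh
        push_cast at this; linarith
      have hpos : (0:ℝ) < ((n / 2 : ℕ) : ℝ) := by
        have : (0:ℕ) < n / 2 := by omega
        exact_mod_cast this
      have hd : Real.logb 2 ((n:ℝ) / 2) = Real.logb 2 n - 1 := by
        rw [Real.logb_div (by positivity) (by norm_num),
          Real.logb_self_eq_one (by norm_num)]
      calc Real.logb 2 (↑(n / 2) : ℝ) ≤ Real.logb 2 ((n:ℝ) / 2) :=
            Real.logb_le_logb_of_le (by norm_num) hpos h2m
        _ = Real.logb 2 n - 1 := hd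
    by_cases hpar : n % 2 = 0
    · -- even case
      have hm' : (n + 1) / 2 = n / 2 := by omega
      obtain ⟨hB1, hB2⟩ := Wf_spec ((n + 1) / 2) (by omega)
      have hg := hphi ((n + 1) / 2) (Wf ((n + 1) / 2)) (by omega) hB1 hB2
      rw [hm'] at hg hrec
      obtain ⟨hN1, hN2⟩ := Wf_spec n (by omega)
      have e1 : (2:ℕ) ^ (Wf (n/2) + 1) = 2 * 2 ^ (Wf (n/2)) := by ring
      have e2 : (2:ℕ) ^ (Wf (n/2) + 2) = 4 * 2 ^ (Wf (n/2)) := by ring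
      have e3 : (2:ℕ) ^ (Wf (n/2) + 1 + 1) = 4 * 2 ^ (Wf (n/2)) := by ring
      have e4 : (2:ℕ) ^ (Wf (n/2) + 1 + 2) = 8 * 2 ^ (Wf (n/2)) := by ring
      have hWn : Wf n = Wf (n / 2) + 1 := by
        apply W_unique hN1 hN2 <;> omega
      have hn2 : (n : ℝ) = 2 * ↑(n / 2) := by exact_mod_cast (by omega : n = 2 * (n/2))
      have key : (n : ℝ) * ((Wf (n/2) : ℝ) + 1) - (4/3) * 2 ^ (Wf (n/2) + 1) =
          ((↑(n/2) : ℝ) * (Wf (n/2) : ℝ) - (4/3) * 2 ^ (Wf (n/2))) +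
          (((Wf (n/2) : ℝ) + 1) * (↑(n/2) : ℝ) - (4/3) * 2 ^ (Wf (n/2)) + 2/3) +
          (↑(n/2) : ℝ) - 2/3 := by
        rw [hn2]; ring
      rw [hWn]
      push_cast
      push_cast at key hg IH
      linarith
    · -- odd case
      have hm1 : (n + 1) / 2 = n / 2 + 1 := by omega
      obtain ⟨hB1, hB2⟩ := Wf_spec ((n + 1) / 2) (by omega)
      have hg := hphi ((n + 1) / 2) (Wf ((n + 1) / 2)) (by omega) hB1 hB2
      rw [hm1] at hg hB1 hB2 hrec
      obtain ⟨hN1, hN2⟩ := Wf_spec n (by omega)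
      have hn2 : (n : ℝ) = 2 * ↑(n / 2) + 1 := by
        exact_mod_cast (by omega : n = 2 * (n/2) + 1)
      have hnp := three_mul_ne_pow2 (n/2 + 1) (Wf (n/2) + 2)
      have hcase : 3 * (n/2) + 3 < 2 ^ (Wf (n/2) + 2) ∨
          3 * (n/2) + 2 = 2 ^ (Wf (n/2) + 2) ∨
          3 * (n/2) + 1 = 2 ^ (Wf (n/2) + 2) := by omega
      have e1 : (2:ℕ) ^ (Wf (n/2) + 1) = 2 * 2 ^ (Wf (n/2)) := by ring
      have e2 : (2:ℕ) ^ (Wf (n/2) + 2) = 4 * 2 ^ (Wf (n/2)) := by ring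
      have e3 : (2:ℕ) ^ (Wf (n/2) + 1 + 1) = 4 * 2 ^ (Wf (n/2)) := by ring
      have e4 : (2:ℕ) ^ (Wf (n/2) + 1 + 2) = 8 * 2 ^ (Wf (n/2)) := by ring
      have e5 : (2:ℕ) ^ (Wf (n/2) + 2 + 1) = 8 * 2 ^ (Wf (n/2)) := by ring
      have e6 : (2:ℕ) ^ (Wf (n/2) + 2 + 2) = 16 * 2 ^ (Wf (n/2)) := by ring
      rcases hcase with hc | hc | hc
      · -- case A
        have hWm1 : Wf (n/2 + 1) = Wf (n/2) := by
          apply W_unique hB1 hB2 <;> omega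
        have hWn : Wf n = Wf (n/2) + 1 := by
          apply W_unique hN1 hN2 <;> omega
        rw [hWm1] at hg
        have key : (n : ℝ) * ((Wf (n/2) : ℝ) + 1) - (4/3) * 2 ^ (Wf (n/2) + 1) + 2 =
            ((↑(n/2) : ℝ) * (Wf (n/2) : ℝ) - (4/3) * 2 ^ (Wf (n/2))) +
            (((Wf (n/2) : ℝ) + 1) * ((↑(n/2) : ℝ) + 1) - (4/3) * 2 ^ (Wf (n/2)) + 2/3) +
            (↑(n/2) : ℝ) + 4/3 := by
          rw [hn2]; ring
        rw [hWn]
        push_cast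
        push_cast at key hg IH
        linarith
      · -- case B
        have hWm1 : Wf (n/2 + 1) = Wf (n/2) + 1 := by
          apply W_unique hB1 hB2 <;> omega
        have hWn : Wf n = Wf (n/2) + 1 := by
          apply W_unique hN1 hN2 <;> omega
        rw [hWm1] at hg
        have hmP : (3:ℝ) * (↑(n/2) : ℝ) + 2 = 2 ^ (Wf (n/2) + 2) := by exact_mod_cast hc
        have key : (n : ℝ) * ((Wf (n/2) : ℝ) + 1) - (4/3) * 2 ^ (Wf (n/2) + 1) + 1 =
            ((↑(n/2) : ℝ) * (Wf (n/2) : ℝ) - (4/3) * 2 ^ (Wf (n/2))) +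
            (((Wf (n/2) : ℝ) + 1 + 1) * ((↑(n/2) : ℝ) + 1) - (4/3) * 2 ^ (Wf (n/2) + 1) + 2/3) +
            (↑(n/2) : ℝ) := by
          rw [hn2]; linear_combination (-(1:ℝ)/3) * hmP
        rw [hWn]
        push_cast
        push_cast at key hg IH
        linarith
      · -- case C
        have hWm1 : Wf (n/2 + 1) = Wf (n/2) + 1 := by
          apply W_unique hB1 hB2 <;> omega
        have hWn : Wf n = Wf (n/2) + 2 := by
          apply W_unique hN1 hN2 <;> omega
        rw [hWm1] at hg
        have hmP : (3:ℝ) * (↑(n/2) : ℝ) + 1 = 2 ^ (Wf (n/2) + 2) := by exact_mod_cast hc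
        have key : (n : ℝ) * ((Wf (n/2) : ℝ) + 2) - (4/3) * 2 ^ (Wf (n/2) + 2) + 1 =
            ((↑(n/2) : ℝ) * (Wf (n/2) : ℝ) - (4/3) * 2 ^ (Wf (n/2))) +
            (((Wf (n/2) : ℝ) + 1 + 1) * ((↑(n/2) : ℝ) + 1) - (4/3) * 2 ^ (Wf (n/2) + 1) + 2/3) +
            (↑(n/2) : ℝ) := by
          rw [hn2]; linear_combination ((1:ℝ)/3) * hmP
        rw [hWn]
        push_cast
        push_cast at key hg IH
        linarith

/-- Knuth's worst-case bound for MergeInsertion: if the comparison count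
satisfies `F(n) = ⌊n/2⌋ + F(⌊n/2⌋) + G(⌈n/2⌉)` with `F(1) = 0`, and
`G(m) ≤ k_m·(m - t_{k_m-1}) + ∑_{1 ≤ k < k_m} k·(t_k - t_{k-1})` whenever
`t_{k_m-1} ≤ m < t_{k_m}` (with `t_k = (2^(k+1)+(-1)^k)/3`), then
`F(n) ≤ n log₂ n - (3 - log₂ 3)·n + n·(y + 1 - 2^y) + O(log n)`, where
`y = ⌈log₂(3n/4)⌉ - log₂(3n/4)`. -/
theorem mergeInsertion_worst_case_bound (t : ℕ → ℕ)
    (ht : ∀ k : ℕ, (3 : ℤ) * t k = 2 ^ (k + 1) + (-1) ^ k)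
    (F G : ℕ → ℝ) (hF1 : F 1 = 0)
    (hFrec : ∀ n : ℕ, 2 ≤ n → F n = ((n / 2 : ℕ) : ℝ) + F (n / 2) + G ((n + 1) / 2))
    (hG : ∀ m : ℕ, 1 ≤ m → ∀ km : ℕ, 1 ≤ km → t (km - 1) ≤ m → m < t km →
      G m ≤ (km : ℝ) * ((m : ℝ) - (t (km - 1) : ℝ)) +
        ∑ k ∈ Finset.Icc 1 (km - 1), (k : ℝ) * ((t k : ℝ) - (t (k - 1) : ℝ))) :
    ∃ C : ℝ, 0 ≤ C ∧ ∀ n : ℕ, 2 ≤ n →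
      F n ≤ (n : ℝ) * Real.logb 2 n - (3 - Real.logb 2 3) * n +
        (n : ℝ) * ((((⌈Real.logb 2 (3 * n / 4)⌉ : ℤ) : ℝ) - Real.logb 2 (3 * n / 4)) + 1 -
          (2 : ℝ) ^ (((⌈Real.logb 2 (3 * n / 4)⌉ : ℤ) : ℝ) - Real.logb 2 (3 * n / 4))) +
        C * Real.logb 2 n := by
  refine ⟨2, by norm_num, ?_⟩
  have hphi : ∀ m Wm : ℕ, 1 ≤ m → 2 ^ (Wm + 1) < 3 * m → 3 * m < 2 ^ (Wm + 2) →
      G m ≤ ((Wm : ℝ) + 1) * m - (4/3) * 2 ^ Wm + 2/3 :=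
    fun m Wm h1 h2 h3 => G_le_phi t ht G hG m Wm h1 h2 h3
  have hmain := main_ind F G hF1 hFrec hphi
  intro n hn
  obtain ⟨h1, h2⟩ := Wf_spec n (by omega)
  have hn0 : (0:ℝ) < (n:ℝ) := by exact_mod_cast (by omega : 0 < n)
  have hx : (0:ℝ) < 3 * (n:ℝ) / 4 := by linarith
  have h1R : (2:ℝ) ^ (Wf n) * 2 < 3 * (n:ℝ) := by
    have h1' : ((2 ^ (Wf n + 1) : ℕ) : ℝ) < ((3 * n : ℕ) : ℝ) := by exact_mod_cast h1
    push_cast at h1'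
    have e : (2:ℝ) ^ (Wf n + 1) = 2 ^ (Wf n) * 2 := by ring
    linarith
  have h2R : 3 * (n:ℝ) < 4 * 2 ^ (Wf n) := by
    have h2' : ((3 * n : ℕ) : ℝ) < ((2 ^ (Wf n + 2) : ℕ) : ℝ) := by exact_mod_cast h2
    push_cast at h2'
    have e : (2:ℝ) ^ (Wf n + 2) = 4 * 2 ^ (Wf n) := by ring
    linarith
  have hcast : (((Wf n : ℤ)) : ℝ) = ((Wf n : ℕ) : ℝ) := by push_cast; ring
  have hceil : (⌈Real.logb 2 (3 * (n:ℝ) / 4)⌉ : ℤ) = (Wf n : ℤ) := by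
    rw [Int.ceil_eq_iff]
    constructor
    · rw [hcast]
      rw [Real.lt_logb_iff_rpow_lt (by norm_num) hx]
      rw [Real.rpow_sub (by norm_num : (0:ℝ) < 2), Real.rpow_one, Real.rpow_natCast]
      rw [div_lt_iff₀ (by norm_num : (0:ℝ) < 2)] at *
      linarith
    · rw [hcast]
      rw [Real.logb_le_iff_le_rpow (by norm_num) hx]
      rw [Real.rpow_natCast]
      linarith
  rw [hceil]
  have hL : Real.logb 2 (3 * (n:ℝ) / 4) = Real.logb 2 3 + Real.logb 2 n - 2 := by
    rw [Real.logb_div (by positivity) (by norm_num),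
      Real.logb_mul (by norm_num) (ne_of_gt hn0),
      show (4:ℝ) = 2 ^ (2:ℕ) by norm_num, Real.logb_pow,
      Real.logb_self_eq_one (by norm_num)]
    push_cast
    ring
  have hpow : (2:ℝ) ^ ((((Wf n : ℤ)) : ℝ) - Real.logb 2 (3 * (n:ℝ) / 4)) =
      2 ^ (Wf n) * (4 / (3 * (n:ℝ))) := by
    rw [Real.rpow_sub (by norm_num : (0:ℝ) < 2),
      Real.rpow_logb (by norm_num) (by norm_num) hx, hcast, Real.rpow_natCast]
    field_simp
  have hiden : (n : ℝ) * Real.logb 2 n - (3 - Real.logb 2 3) * n +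
      (n : ℝ) * (((((Wf n : ℤ)) : ℝ) - Real.logb 2 (3 * n / 4)) + 1 -
        (2 : ℝ) ^ ((((Wf n : ℤ)) : ℝ) - Real.logb 2 (3 * n / 4))) =
      (n:ℝ) * (Wf n) - (4/3) * 2 ^ (Wf n) := by
    rw [hpow, hL, hcast]
    field_simp
    ring
  have := hmain n hn
  linarith [hiden]
end
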